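/- If L ⊆ (Σ_I × Σ_O)^ω is a Borel set, then for every delay function f, the language shift_f(L) ⊆ (Σ_I × (Σ_O ∪ {▷}))^ω is Borel. More precisely, by transfinite induction: if L ∈ Σ_α then shift_f(L) ∈ Σ_{α+2}, and if L ∈ Π_α then shift_f(L) ∈ Π_{α+2}. -/

import Mathlib

open scoped Classical MeasureTheory

section DelayGames

variable {I O A B : Type}

/-- `shiftSeq f β = ▷^{f 0 - 1} β 0 ▷^{f 1 - 1} β 1 ⋯`, where the skip symbol `▷`
is modeled by `none` and a letter `b ∈ Σ_O` by `some b`. -/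
noncomputable def shiftSeq (f : ℕ → ℕ) (β : ℕ → O) : ℕ → Option O := fun n =>
  if h : ∃ i, (∑ j ∈ Finset.range (i + 1), f j) = n + 1 then some (β (Nat.find h))
  else none

/-- `shift_f(L) = { (α, shift_f(β)) : (α, β) ∈ L }`. -/
def shiftLang (f : ℕ → ℕ) (L : Set ((ℕ → I) × (ℕ → O))) :
    Set ((ℕ → I) × (ℕ → Option O)) :=
  {p | ∃ β : ℕ → O, (p.1, β) ∈ L ∧ p.2 = shiftSeq f β}

/-- The morphism `h` erasing the skip symbol, applied to an infinite word
(meaningful when the word has infinitely many non-skip letters). -/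
noncomputable def eraseSkips [Inhabited O] (β : ℕ → Option O) : ℕ → O := fun n =>
  (β (Nat.nth (fun k => (β k).isSome) n)).getD default

/-- `skip(L) = ⋃_f shift_f(L) = { (α,β) : β has infinitely many non-▷ letters and (α, h β) ∈ L }`. -/
def skipLang [Inhabited O] (L : Set ((ℕ → I) × (ℕ → O))) :
    Set ((ℕ → I) × (ℕ → Option O)) :=
  {p | {k | (p.2 k).isSome}.Infinite ∧ (p.1, eraseSkips p.2) ∈ L}

/-- A play of a Gale-Stewart game is consistent with the Player O strategy `σ`. -/
def gsConsO (σ : List A → B) (α : ℕ → A) (β : ℕ → B) : Prop :=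
  ∀ i, β i = σ (List.ofFn fun j : Fin (i + 1) => α j)

/-- A play of a Gale-Stewart game is consistent with the Player I strategy `τ`. -/
def gsConsI (τ : List B → A) (α : ℕ → A) (β : ℕ → B) : Prop :=
  ∀ i, α i = τ (List.ofFn fun j : Fin i => β j)

/-- `σ` is a winning strategy for Player O in the Gale-Stewart game with winning condition `W`. -/
def gsWinO (W : Set ((ℕ → A) × (ℕ → B))) (σ : List A → B) : Prop :=
  ∀ α β, gsConsO σ α β → (α, β) ∈ W

/-- `τ` is a winning strategy for Player I in the Gale-Stewart game with winning condition `W`. -/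
def gsWinI (W : Set ((ℕ → A) × (ℕ → B))) (τ : List B → A) : Prop :=
  ∀ α β, gsConsI τ α β → (α, β) ∉ W

/-- The infinite word `u 0 · u 1 · u 2 ⋯` built by Player I in a delay game
(well-defined at position `n` as soon as the first `n+1` blocks have more than `n` letters). -/
def outcomeI [Inhabited I] (u : ℕ → List I) : ℕ → I := fun n =>
  ((List.ofFn fun j : Fin (n + 1) => u j).flatten).getD n default

/-- The word `v 0 ⋯ v (i-1)` of the first `i` letters of `v`. -/
def prefixW (v : ℕ → O) (i : ℕ) : List O := List.ofFn fun j : Fin i => v j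

/-- The concatenation `u 0 · u 1 ⋯ u i` of Player I's moves up to round `i`. -/
def inputsUpTo (u : ℕ → List I) (i : ℕ) : List I :=
  (List.ofFn fun j : Fin (i + 1) => u j).flatten

/-- `τ : Σ_O^* → Σ_I^*` is a (syntactically valid) Player I strategy for the
delay game `Γ_f(L)`: it answers with `f i` letters in round `i`. -/
def delayStratI (f : ℕ → ℕ) (τ : List O → List I) : Prop :=
  ∀ w : List O, (τ w).length = f w.length

/-- `τ` is winning for Player I in the delay game `Γ_f(L)`. -/
def delayWinI [Inhabited I] (f : ℕ → ℕ) (L : Set ((ℕ → I) × (ℕ → O)))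
    (τ : List O → List I) : Prop :=
  ∀ (u : ℕ → List I) (v : ℕ → O), (∀ i, (u i).length = f i) →
    (∀ i, u i = τ (prefixW v i)) → (outcomeI u, v) ∉ L

/-- `σ : Σ_I^* → Σ_O` is winning for Player O in the delay game `Γ_f(L)`. -/
def delayWinO [Inhabited I] (f : ℕ → ℕ) (L : Set ((ℕ → I) × (ℕ → O)))
    (σ : List I → O) : Prop :=
  ∀ (u : ℕ → List I) (v : ℕ → O), (∀ i, (u i).length = f i) →
    (∀ i, v i = σ (inputsUpTo u i)) → (outcomeI u, v) ∈ L

/-- A round-counting strategy `σ : Σ_I^* × ℕ → Σ_O` is winning for Player O in `Γ_f(L)`: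
in round `i` Player O plays `σ (u 0 ⋯ u i) i`. -/
def rcWinO [Inhabited I] (f : ℕ → ℕ) (L : Set ((ℕ → I) × (ℕ → O)))
    (σ : List I → ℕ → O) : Prop :=
  ∀ (u : ℕ → List I) (v : ℕ → O), (∀ i, (u i).length = f i) →
    (∀ i, v i = σ (inputsUpTo u i) i) → (outcomeI u, v) ∈ L

/-- An output-tracking strategy `τ : Σ_O^* → Σ_I^ω` is winning for Player I in `Γ_f(L)`:
in round `i` Player I plays the length-`f i` prefix of `τ (v 0 ⋯ v (i-1))`. -/
def otWinI [Inhabited I] (f : ℕ → ℕ) (L : Set ((ℕ → I) × (ℕ → O)))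
    (τ : List O → ℕ → I) : Prop :=
  ∀ (u : ℕ → List I) (v : ℕ → O),
    (∀ i, u i = List.ofFn fun j : Fin (f i) => τ (prefixW v i) j) →
    (outcomeI u, v) ∉ L

/-- A lookahead-counting strategy `τ : Σ_O^* × ℕ → Σ_I^ω` is winning for Player I in `Γ_f(L)`:
in round `i` Player I plays the length-`f i` prefix of `τ (v 0 ⋯ v (i-1), Σ_{j<i} f j)`. -/
def lcWinI [Inhabited I] (f : ℕ → ℕ) (L : Set ((ℕ → I) × (ℕ → O)))
    (τ : List O → ℕ → ℕ → I) : Prop :=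
  ∀ (u : ℕ → List I) (v : ℕ → O),
    (∀ i, u i = List.ofFn fun j : Fin (f i) =>
      τ (prefixW v i) (∑ k ∈ Finset.range i, f k) j) →
    (outcomeI u, v) ∉ L

/-- A history-tracking strategy `τ : Σ_O^* × (ℕ_{>0})^* → Σ_I^ω` is winning for Player I
in `Γ_f(L)`: in round `i` Player I plays the length-`f i` prefix of
`τ (v 0 ⋯ v (i-1), f 0 ⋯ f (i-1))`. -/
def htWinI [Inhabited I] (f : ℕ → ℕ) (L : Set ((ℕ → I) × (ℕ → O)))
    (τ : List O → List ℕ → ℕ → I) : Prop :=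
  ∀ (u : ℕ → List I) (v : ℕ → O),
    (∀ i, u i = List.ofFn fun j : Fin (f i) => τ (prefixW v i) (prefixW f i) j) →
    (outcomeI u, v) ∉ L

/-- `f ⊑ f'` : in every round, the lookahead granted by `f'` is at least that granted by `f`. -/
def delayLE (f f' : ℕ → ℕ) : Prop :=
  ∀ i, (∑ j ∈ Finset.range (i + 1), f j) ≤ ∑ j ∈ Finset.range (i + 1), f' j

end DelayGames
/-- The Borel hierarchy over a topological space: `SigLevel 1` is the class of open
sets, and for `α > 1`, `SigLevel α` is the class of countable unions of sets whose
complement lies in `SigLevel β` for some `0 < β < α` (i.e. of `Π_β` sets).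
Membership of `s` in `Π_α` is expressed as `sᶜ ∈ SigLevel α`. -/
noncomputable def SigLevel {X : Type} [TopologicalSpace X] : Ordinal → Set (Set X) :=
  Ordinal.lt_wf.fix fun α IH =>
    if α = 1 then {s | IsOpen s}
    else {s | ∃ (g : ℕ → Set X) (b : ℕ → Ordinal) (hb : ∀ n, b n < α),
      (∀ n, b n ≠ 0 ∧ (g n)ᶜ ∈ IH (b n) (hb n)) ∧ s = ⋃ n, g n}

section Aux

open Set

variable {X Y : Type} [TopologicalSpace X] [TopologicalSpace Y]

lemma one_lt_add_two (α : Ordinal) : (1 : Ordinal) < α + 2 :=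
  lt_of_lt_of_le one_lt_two (by simpa using add_le_add_right (Ordinal.zero_le α) 2)

lemma sigLevel_def (α : Ordinal) :
    SigLevel (X := X) α = if α = 1 then {s | IsOpen s}
    else {s | ∃ (g : ℕ → Set X) (b : ℕ → Ordinal) (_hb : ∀ n, b n < α),
      (∀ n, b n ≠ 0 ∧ (g n)ᶜ ∈ SigLevel (b n)) ∧ s = ⋃ n, g n} := by
  unfold SigLevel
  rw [WellFounded.fix_eq]

lemma mem_sigLevel_one {s : Set X} (hs : IsOpen s) : s ∈ SigLevel 1 := by
  rw [sigLevel_def]; simpa using hs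

lemma sigLevel_ne_zero {s : Set X} {α : Ordinal} (hs : s ∈ SigLevel α) : α ≠ 0 := by
  rintro rfl
  rw [sigLevel_def, if_neg (by norm_num)] at hs
  obtain ⟨g, b, hb, -, -⟩ := hs
  exact (not_lt_of_ge zero_le) (hb 0)

lemma compl_mem_sigLevel_of {s : Set X} {β γ : Ordinal} (h0 : β ≠ 0) (hlt : β < γ)
    (hs : sᶜ ∈ SigLevel β) : s ∈ SigLevel γ := by
  have h1 : (1 : Ordinal) < γ := lt_of_le_of_lt (Ordinal.one_le_iff_ne_zero.mpr h0) hlt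
  rw [sigLevel_def, if_neg h1.ne']
  exact ⟨fun _ => s, fun _ => β, fun _ => hlt, fun _ => ⟨h0, hs⟩, (iUnion_const s).symm⟩

lemma closed_mem_sigLevel {s : Set X} {γ : Ordinal} (h1 : 1 < γ) (hs : IsClosed s) :
    s ∈ SigLevel γ :=
  compl_mem_sigLevel_of one_ne_zero h1 (mem_sigLevel_one hs.isOpen_compl)

/-- every open set in a pseudometrizable space is a countable union of closed sets -/
lemma open_fsigma [TopologicalSpace.PseudoMetrizableSpace X]
    {s : Set X} (hs : IsOpen s) : ∃ F : ℕ → Set X, (∀ n, IsClosed (F n)) ∧ s = ⋃ n, F n := by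
  letI := TopologicalSpace.pseudoMetrizableSpacePseudoMetric X
  rcases eq_empty_or_nonempty sᶜ with h | h
  · refine ⟨fun _ => s, fun _ => ?_, (iUnion_const s).symm⟩
    exact (compl_empty_iff.mp h) ▸ isClosed_univ
  · refine ⟨fun n => {x | 1 / (n + 1 : ℝ) ≤ Metric.infDist x sᶜ}, fun n => ?_, ?_⟩
    · exact isClosed_le continuous_const (Metric.continuous_infDist_pt _)
    · ext x
      simp only [mem_iUnion, mem_setOf_eq]
      constructor
      · intro hx
        obtain ⟨ε, hε, hball⟩ := Metric.isOpen_iff.mp hs x hx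
        obtain ⟨n, hn⟩ := exists_nat_one_div_lt hε
        refine ⟨n, le_of_not_gt fun hlt => ?_⟩
        obtain ⟨y, hy, hxy⟩ := (Metric.infDist_lt_iff h).mp hlt
        exact hy (hball (show dist y x < ε by rw [dist_comm]; exact hxy.trans hn))
      · rintro ⟨n, hn⟩
        by_contra hx
        have h0 : Metric.infDist x sᶜ = 0 := Metric.infDist_zero_of_mem hx
        rw [h0] at hn
        have : (0:ℝ) < 1 / (n + 1) := by positivity
        linarith

lemma sigLevel_mono [TopologicalSpace.PseudoMetrizableSpace X]
    {α γ : Ordinal} (h : α ≤ γ) {s : Set X} (hs : s ∈ SigLevel α) : s ∈ SigLevel γ := by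
  rcases h.lt_or_eq with h | rfl
  · by_cases h1 : α = 1
    · subst h1
      rw [sigLevel_def, if_pos rfl] at hs
      obtain ⟨F, hF, rfl⟩ := open_fsigma hs
      rw [sigLevel_def, if_neg h.ne']
      exact ⟨F, fun _ => 1, fun _ => h, fun n => ⟨one_ne_zero,
        mem_sigLevel_one (hF n).isOpen_compl⟩, rfl⟩
    · rw [sigLevel_def, if_neg h1] at hs
      obtain ⟨g, b, hb, hgb, rfl⟩ := hs
      have hb1 : (1 : Ordinal) ≤ b 0 := Ordinal.one_le_iff_ne_zero.mpr (hgb 0).1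
      have hγ : (1 : Ordinal) < γ := lt_of_le_of_lt hb1 ((hb 0).trans h)
      rw [sigLevel_def, if_neg hγ.ne']
      exact ⟨g, b, fun n => (hb n).trans h, hgb, rfl⟩
  · exact hs

lemma sigLevel_union {δ : Ordinal} {s t : Set X}
    (hs : s ∈ SigLevel δ) (ht : t ∈ SigLevel δ) : s ∪ t ∈ SigLevel δ := by
  by_cases h1 : δ = 1
  · subst h1
    rw [sigLevel_def, if_pos rfl] at hs ht ⊢
    exact hs.union ht
  · rw [sigLevel_def, if_neg h1] at hs ht ⊢
    obtain ⟨g, b, hb, hgb, rfl⟩ := hs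
    obtain ⟨g', b', hb', hgb', rfl⟩ := ht
    refine ⟨fun k => if Even k then g (k / 2) else g' (k / 2),
            fun k => if Even k then b (k / 2) else b' (k / 2),
            fun k => by dsimp only; split <;> [exact hb _; exact hb' _],
            fun k => by dsimp only; split <;> [exact hgb _; exact hgb' _], ?_⟩
    ext x
    simp only [mem_union, mem_iUnion]
    constructor
    · rintro (⟨n, hn⟩ | ⟨n, hn⟩)
      · exact ⟨2 * n, by simp only [even_two_mul n, if_pos]; simpa [Nat.mul_div_cancel_left] using hn⟩
      · refine ⟨2 * n + 1, ?_⟩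
        have he : ¬ Even (2 * n + 1) := by simp [Nat.even_add_one, parity_simps]
        rw [if_neg he]
        have : (2 * n + 1) / 2 = n := by omega
        rwa [this]
    · rintro ⟨k, hk⟩
      by_cases he : Even k
      · rw [if_pos he] at hk; exact Or.inl ⟨_, hk⟩
      · rw [if_neg he] at hk; exact Or.inr ⟨_, hk⟩

lemma sigLevel_inter [TopologicalSpace.PseudoMetrizableSpace X] {δ : Ordinal} {s t : Set X}
    (hs : s ∈ SigLevel δ) (ht : t ∈ SigLevel δ) : s ∩ t ∈ SigLevel δ := by
  by_cases h1 : δ = 1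
  · subst h1
    rw [sigLevel_def, if_pos rfl] at hs ht ⊢
    exact hs.inter ht
  · rw [sigLevel_def, if_neg h1] at hs ht ⊢
    obtain ⟨g, b, hb, hgb, rfl⟩ := hs
    obtain ⟨g', b', hb', hgb', rfl⟩ := ht
    refine ⟨fun k => g (Nat.unpair k).1 ∩ g' (Nat.unpair k).2,
            fun k => max (b (Nat.unpair k).1) (b' (Nat.unpair k).2),
            fun k => max_lt (hb _) (hb' _), fun k => ⟨?_, ?_⟩, ?_⟩
    · intro h0
      simp only at h0
      apply (hgb (Nat.unpair k).1).1
      have hle := le_max_left (b (Nat.unpair k).1) (b' (Nat.unpair k).2)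
      rw [h0] at hle
      exact le_antisymm hle zero_le
    · rw [compl_inter]
      exact sigLevel_union (sigLevel_mono (le_max_left _ _) (hgb _).2)
        (sigLevel_mono (le_max_right _ _) (hgb' _).2)
    · ext x
      simp only [mem_inter_iff, mem_iUnion]
      constructor
      · rintro ⟨⟨n, hn⟩, ⟨m, hm⟩⟩
        exact ⟨Nat.pair n m, by rw [Nat.unpair_pair]; exact ⟨hn, hm⟩⟩
      · rintro ⟨k, hk1, hk2⟩
        exact ⟨⟨_, hk1⟩, ⟨_, hk2⟩⟩

lemma sigLevel_preimage {Φ : Y → X} (hΦ : Continuous Φ) (α : Ordinal) :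
    ∀ s ∈ SigLevel α, Φ ⁻¹' s ∈ SigLevel α := by
  induction α using Ordinal.induction with
  | _ α IH =>
    intro s hs
    by_cases h1 : α = 1
    · subst h1
      rw [sigLevel_def, if_pos rfl] at hs ⊢
      exact hs.preimage hΦ
    · rw [sigLevel_def, if_neg h1] at hs ⊢
      obtain ⟨g, b, hb, hgb, rfl⟩ := hs
      refine ⟨fun n => Φ ⁻¹' g n, b, hb, fun n => ⟨(hgb n).1, ?_⟩, by rw [preimage_iUnion]⟩
      rw [← preimage_compl]
      exact IH (b n) (hb n) _ (hgb n).2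

end Aux

/-- if `L` is Borel then `shift_f(L)` is Borel; more precisely,
`L ∈ Σ_α` implies `shift_f(L) ∈ Σ_{α+2}` and `L ∈ Π_α` implies `shift_f(L) ∈ Π_{α+2}`. -/
theorem stmt2 {I O : Type} [Fintype I] [Fintype O]
    [TopologicalSpace I] [DiscreteTopology I]
    [TopologicalSpace O] [DiscreteTopology O]
    [TopologicalSpace (Option O)] [DiscreteTopology (Option O)]
    (f : ℕ → ℕ) (hf : ∀ i, 0 < f i) (L : Set ((ℕ → I) × (ℕ → O))) :
    (MeasurableSet[borel ((ℕ → I) × (ℕ → O))] L →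
      MeasurableSet[borel ((ℕ → I) × (ℕ → Option O))] (shiftLang f L)) ∧
    (∀ α : Ordinal, L ∈ SigLevel α → shiftLang f L ∈ SigLevel (α + 2)) ∧
    (∀ α : Ordinal, Lᶜ ∈ SigLevel α → (shiftLang f L)ᶜ ∈ SigLevel (α + 2)) := by
  classical
  rcases isEmpty_or_nonempty O with hO | hO
  · have hempty : shiftLang f L = ∅ := by
      ext p
      simp only [shiftLang, Set.mem_setOf_eq, Set.mem_empty_iff_false, iff_false]
      rintro ⟨β, -, -⟩
      exact (hO.false (β 0)).elim
    refine ⟨fun _ => by rw [hempty]; exact @MeasurableSet.empty _ (borel _), fun α _ => ?_, fun α _ => ?_⟩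
    · rw [hempty]; exact closed_mem_sigLevel (one_lt_add_two α) isClosed_empty
    · rw [hempty, Set.compl_empty]; exact closed_mem_sigLevel (one_lt_add_two α) isClosed_univ
  obtain ⟨d⟩ := hO
  have hSpos : ∀ i, 0 < ∑ j ∈ Finset.range (i + 1), f j := fun i =>
    Finset.sum_pos (fun j _ => hf j) ⟨0, Finset.mem_range.mpr (Nat.succ_pos i)⟩
  have hSmono : StrictMono (fun i => ∑ j ∈ Finset.range (i + 1), f j) := by
    apply strictMono_nat_of_lt_succ
    intro i
    conv_rhs => rw [Finset.sum_range_succ]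
    exact Nat.lt_add_of_pos_right (hf (i + 1))
  have hS1 : ∀ i, (∑ j ∈ Finset.range (i + 1), f j) - 1 + 1 = ∑ j ∈ Finset.range (i + 1), f j :=
    fun i => Nat.succ_pred_eq_of_pos (hSpos i)
  have key_some : ∀ (β : ℕ → O) (n i : ℕ), (∑ j ∈ Finset.range (i + 1), f j) = n + 1 →
      shiftSeq f β n = some (β i) := by
    intro β n i hi
    have hex : ∃ k, (∑ j ∈ Finset.range (k + 1), f j) = n + 1 := ⟨i, hi⟩
    simp only [shiftSeq]
    rw [dif_pos hex]
    exact congrArg some (congrArg β (hSmono.injective ((Nat.find_spec hex).trans hi.symm)))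
  have key_none : ∀ (β : ℕ → O) (n : ℕ), (¬ ∃ i, (∑ j ∈ Finset.range (i + 1), f j) = n + 1) →
      shiftSeq f β n = none := by
    intro β n h
    simp only [shiftSeq]
    rw [dif_neg h]
  set Φ : (ℕ → I) × (ℕ → Option O) → (ℕ → I) × (ℕ → O) :=
    fun p => (p.1, fun i => (p.2 ((∑ j ∈ Finset.range (i + 1), f j) - 1)).getD d) with hΦdef
  set C : Set ((ℕ → I) × (ℕ → Option O)) :=
    {p | ∀ n, ((p.2 n).isSome = true ↔ ∃ i, (∑ j ∈ Finset.range (i + 1), f j) = n + 1)} with hCdef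
  have hEq : shiftLang f L = Φ ⁻¹' L ∩ C := by
    ext p
    constructor
    · rintro ⟨β, hβL, hp2⟩
      have hΦp : Φ p = (p.1, β) := by
        refine Prod.ext rfl ?_
        funext i
        show (p.2 ((∑ j ∈ Finset.range (i + 1), f j) - 1)).getD d = β i
        rw [hp2, key_some β _ i (hS1 i).symm]
        rfl
      refine ⟨?_, ?_⟩
      · show Φ p ∈ L
        rw [hΦp]; exact hβL
      · intro n
        rw [hp2]
        by_cases h : ∃ i, (∑ j ∈ Finset.range (i + 1), f j) = n + 1
        · obtain ⟨i, hi⟩ := h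
          rw [key_some β n i hi]
          exact iff_of_true rfl ⟨i, hi⟩
        · rw [key_none β n h]
          simpa using h
    · rintro ⟨hL, hC⟩
      refine ⟨(Φ p).2, hL, ?_⟩
      funext n
      by_cases h : ∃ i, (∑ j ∈ Finset.range (i + 1), f j) = n + 1
      · obtain ⟨i, hi⟩ := h
        rw [key_some _ n i hi]
        have hn : (∑ j ∈ Finset.range (i + 1), f j) - 1 = n := by omega
        have hsome : (p.2 n).isSome = true := (hC n).mpr ⟨i, hi⟩
        obtain ⟨a, ha⟩ := Option.isSome_iff_exists.mp hsome
        show p.2 n = some ((p.2 ((∑ j ∈ Finset.range (i + 1), f j) - 1)).getD d)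
        rw [hn, ha]
        rfl
      · rw [key_none _ n h]
        exact Option.not_isSome_iff_eq_none.mp fun hs => h ((hC n).mp hs)
  have hΦcont : Continuous Φ := by
    refine continuous_fst.prodMk (continuous_pi fun i => ?_)
    have hg : Continuous fun o : Option O => o.getD d := continuous_of_discreteTopology
    exact hg.comp ((continuous_apply _).comp continuous_snd)
  have hCclosed : IsClosed C := by
    have hCeq : C = ⋂ n, (fun p : (ℕ → I) × (ℕ → Option O) => p.2 n) ⁻¹'
        {o : Option O | o.isSome = true ↔ ∃ i, (∑ j ∈ Finset.range (i + 1), f j) = n + 1} := by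
      ext p
      simp only [hCdef, Set.mem_setOf_eq, Set.mem_iInter, Set.mem_preimage]
    rw [hCeq]
    exact isClosed_iInter fun n =>
      (isClosed_discrete _).preimage ((continuous_apply n).comp continuous_snd)
  refine ⟨?_, ?_, ?_⟩
  · intro hL
    letI m1 : MeasurableSpace ((ℕ → I) × (ℕ → O)) := borel _
    letI m2 : MeasurableSpace ((ℕ → I) × (ℕ → Option O)) := borel _
    haveI : BorelSpace ((ℕ → I) × (ℕ → O)) := ⟨rfl⟩
    haveI : BorelSpace ((ℕ → I) × (ℕ → Option O)) := ⟨rfl⟩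
    rw [hEq]
    exact (hΦcont.measurable hL).inter hCclosed.measurableSet
  · intro α hα
    rw [hEq]
    exact sigLevel_inter
      (sigLevel_mono (le_self_add (a := α) (b := 2)) (sigLevel_preimage hΦcont α L hα))
      (closed_mem_sigLevel (one_lt_add_two α) hCclosed)
  · intro α hα
    rw [hEq, Set.compl_inter]
    refine sigLevel_union ?_ ?_
    · rw [← Set.preimage_compl]
      exact sigLevel_mono (le_self_add (a := α) (b := 2)) (sigLevel_preimage hΦcont α Lᶜ hα)
    · exact sigLevel_mono (le_of_lt (one_lt_add_two α)) (mem_sigLevel_one hCclosed.isOpen_compl)
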